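/- arXiv:2506.15038 — 4 statements merged into one kernel-verified Lean document; each statement's English description precedes it below -/
import Mathlib

section
/- Let K be a locally finite simplicial complex (every vertex belongs to only finitely many simplices) and q ∈ ℕ₀. Then the graph G_q(K) has an infinite connected component if and only if the graph G̃_{q+1}(K) has an infinite connected component. -/
/-- The q-graph (up-connectivity graph) of a simplicial complex `K`: vertices are the
q-simplices of `K`, two distinct q-simplices are adjacent iff some (q+1)-simplex of `K`
contains both. -/
def upGraph {V : Type*} (K : Set (Finset V)) (q : ℕ) :
    SimpleGraph {σ : Finset V // σ ∈ K ∧ σ.card = q + 1} where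
  Adj σ ρ := σ ≠ ρ ∧ ∃ π ∈ K, π.card = q + 2 ∧ σ.1 ⊆ π ∧ ρ.1 ⊆ π
  symm := by
    constructor
    rintro σ ρ ⟨h, π, hπK, hπc, h1, h2⟩
    exact ⟨h.symm, π, hπK, hπc, h2, h1⟩
  loopless := by constructor; rintro σ ⟨h, -⟩; exact h rfl

/-- The down-connectivity graph G̃_{q+1}(K): vertices are the (q+1)-simplices of `K`, two
distinct (q+1)-simplices are adjacent iff some q-simplex of `K` is contained in both. -/
def downGraph {V : Type*} (K : Set (Finset V)) (q : ℕ) :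
    SimpleGraph {π : Finset V // π ∈ K ∧ π.card = q + 2} where
  Adj π τ := π ≠ τ ∧ ∃ σ ∈ K, σ.card = q + 1 ∧ σ ⊆ π.1 ∧ σ ⊆ τ.1
  symm := by
    constructor
    rintro π τ ⟨h, σ, hσK, hσc, h1, h2⟩
    exact ⟨h.symm, σ, hσK, hσc, h2, h1⟩
  loopless := by constructor; rintro π ⟨h, -⟩; exact h rfl

lemma reach_of_walk {α β : Type*} {G : SimpleGraph α} {H : SimpleGraph β} (f : α → β)
    (hadj : ∀ a b, G.Adj a b → H.Reachable (f a) (f b)) {u v : α} (w : G.Walk u v) :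
    H.Reachable (f u) (f v) := by
  induction w with
  | nil => exact SimpleGraph.Reachable.refl _
  | cons h _ ih => exact (hadj _ _ h).trans ih

lemma infinite_comp_map {α β : Type*} {G : SimpleGraph α} {H : SimpleGraph β} (f : α → β)
    (hadj : ∀ a b, G.Adj a b → H.Reachable (f a) (f b))
    (c : G.ConnectedComponent) (hc : c.supp.Infinite)
    (hfib : ∀ b : β, (c.supp ∩ f ⁻¹' {b}).Finite) :
    ∃ d : H.ConnectedComponent, d.supp.Infinite := by
  obtain ⟨a₀, ha₀⟩ := hc.nonempty
  refine ⟨H.connectedComponentMk (f a₀), ?_⟩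
  have hreach : ∀ a ∈ c.supp, H.Reachable (f a₀) (f a) := by
    intro a ha
    rw [SimpleGraph.ConnectedComponent.mem_supp_iff] at ha ha₀
    have : G.Reachable a₀ a := SimpleGraph.ConnectedComponent.eq.mp (ha₀.trans ha.symm)
    obtain ⟨w⟩ := this
    exact reach_of_walk f hadj w
  have hsub : f '' c.supp ⊆ (H.connectedComponentMk (f a₀)).supp := by
    rintro _ ⟨a, ha, rfl⟩
    rw [SimpleGraph.ConnectedComponent.mem_supp_iff]
    exact SimpleGraph.ConnectedComponent.sound (hreach a ha).symm
  have himg : (f '' c.supp).Infinite := by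
    intro hfin
    have hcov : c.supp ⊆ ⋃ b ∈ f '' c.supp, (c.supp ∩ f ⁻¹' {b}) := by
      intro a ha
      exact Set.mem_biUnion ⟨a, ha, rfl⟩ ⟨ha, rfl⟩
    apply hc
    exact Set.Finite.subset (hfin.biUnion (fun b _ => hfib b)) hcov
  exact himg.mono hsub

/-- For a locally finite simplicial complex K, the graph G_q(K) has an infinite
connected component iff the graph G̃_{q+1}(K) has an infinite connected component. -/
theorem stmt3 {V : Type*} [DecidableEq V] (K : Set (Finset V)) (q : ℕ)
    (hne : ∀ σ ∈ K, σ.Nonempty)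
    (hdown : ∀ σ ∈ K, ∀ ρ : Finset V, ρ ⊆ σ → ρ.Nonempty → ρ ∈ K)
    (hlocfin : ∀ v : V, {σ : Finset V | σ ∈ K ∧ v ∈ σ}.Finite) :
    (∃ c : (upGraph K q).ConnectedComponent, c.supp.Infinite) ↔
      (∃ c : (downGraph K q).ConnectedComponent, c.supp.Infinite) := by
  constructor
  · -- up ⇒ down
    rintro ⟨c, hc⟩
    -- every vertex of an infinite component lies in some (q+2)-simplex
    have hP : ∀ σ : {σ : Finset V // σ ∈ K ∧ σ.card = q + 1}, σ ∈ c.supp →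
        ∃ π' ∈ K, π'.card = q + 2 ∧ σ.1 ⊆ π' := by
      intro σ hσ
      obtain ⟨ρ, hρ⟩ := (hc.diff (Set.finite_singleton σ)).nonempty
      have hr : (upGraph K q).Reachable σ ρ := by
        rw [SimpleGraph.ConnectedComponent.mem_supp_iff] at hσ
        have hρ1 := hρ.1
        rw [SimpleGraph.ConnectedComponent.mem_supp_iff] at hρ1
        exact SimpleGraph.ConnectedComponent.eq.mp (hσ.trans hρ1.symm)
      obtain ⟨w⟩ := hr
      cases w with
      | nil => exact absurd rfl hρ.2
      | cons h _ =>
        obtain ⟨-, π, hπK, hπc, hσπ, -⟩ := h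
        exact ⟨π, hπK, hπc, hσπ⟩
    have hex : ∀ σ : {σ : Finset V // σ ∈ K ∧ σ.card = q + 1},
        ∃ π : {π : Finset V // π ∈ K ∧ π.card = q + 2},
          (∃ π' ∈ K, π'.card = q + 2 ∧ σ.1 ⊆ π') → σ.1 ⊆ π.1 := by
      intro σ
      by_cases h : ∃ π' ∈ K, π'.card = q + 2 ∧ σ.1 ⊆ π'
      · obtain ⟨π', h1, h2, h3⟩ := h
        exact ⟨⟨π', h1, h2⟩, fun _ => h3⟩
      · obtain ⟨σ₀, hσ₀⟩ := hc.nonempty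
        obtain ⟨π', h1, h2, -⟩ := hP σ₀ hσ₀
        exact ⟨⟨π', h1, h2⟩, fun h' => absurd h' h⟩
    choose f hf using hex
    have hadj : ∀ σ ρ, (upGraph K q).Adj σ ρ → (downGraph K q).Reachable (f σ) (f ρ) := by
      rintro σ ρ ⟨-, π, hπK, hπc, hσπ, hρπ⟩
      have h1 : σ.1 ⊆ (f σ).1 := hf σ ⟨π, hπK, hπc, hσπ⟩
      have h2 : ρ.1 ⊆ (f ρ).1 := hf ρ ⟨π, hπK, hπc, hρπ⟩
      have step : ∀ (s : {σ : Finset V // σ ∈ K ∧ σ.card = q + 1}),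
          s.1 ⊆ (f s).1 → s.1 ⊆ π →
          (downGraph K q).Reachable (f s) ⟨π, hπK, hπc⟩ := by
        intro s hs hsπ
        by_cases h : f s = ⟨π, hπK, hπc⟩
        · rw [h]
        · exact SimpleGraph.Adj.reachable ⟨h, s.1, s.2.1, s.2.2, hs, hsπ⟩
      exact (step σ h1 hσπ).trans (step ρ h2 hρπ).symm
    refine infinite_comp_map f hadj c hc ?_
    intro d
    have hsubset : c.supp ∩ f ⁻¹' {d} ⊆ Subtype.val ⁻¹' {s : Finset V | s ⊆ d.1} := by
      rintro σ ⟨hσ, hfσ⟩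
      have hss := hf σ (hP σ hσ)
      simp only [Set.mem_preimage, Set.mem_singleton_iff] at hfσ
      rw [hfσ] at hss
      exact hss
    have hfin : {s : Finset V | s ⊆ d.1}.Finite := by
      have : {s : Finset V | s ⊆ d.1} = ↑(d.1.powerset) := by
        ext s; simp
      rw [this]
      exact (d.1.powerset).finite_toSet
    exact Set.Finite.subset
      (Set.Finite.preimage Subtype.val_injective.injOn hfin) hsubset
  · -- down ⇒ up
    rintro ⟨c, hc⟩
    have hex : ∀ π : {π : Finset V // π ∈ K ∧ π.card = q + 2},
        ∃ σ : {σ : Finset V // σ ∈ K ∧ σ.card = q + 1}, σ.1 ⊆ π.1 := by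
      intro π
      obtain ⟨v, hv⟩ := hne π.1 π.2.1
      refine ⟨⟨π.1.erase v, ?_, ?_⟩, Finset.erase_subset v π.1⟩
      · apply hdown π.1 π.2.1 _ (Finset.erase_subset v π.1)
        rw [← Finset.card_pos, Finset.card_erase_of_mem hv, π.2.2]; omega
      · rw [Finset.card_erase_of_mem hv, π.2.2]; omega
    choose f hf using hex
    have hadj : ∀ π τ, (downGraph K q).Adj π τ → (upGraph K q).Reachable (f π) (f τ) := by
      rintro π τ ⟨-, σ0, hσK, hσc, h1, h2⟩
      have step : ∀ (p : {π : Finset V // π ∈ K ∧ π.card = q + 2}),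
          σ0 ⊆ p.1 → (upGraph K q).Reachable (f p) ⟨σ0, hσK, hσc⟩ := by
        intro p hsp
        by_cases h : f p = ⟨σ0, hσK, hσc⟩
        · rw [h]
        · exact SimpleGraph.Adj.reachable ⟨h, p.1, p.2.1, p.2.2, hf p, hsp⟩
      exact (step π h1).trans (step τ h2).symm
    refine infinite_comp_map f hadj c hc ?_
    intro σ
    obtain ⟨v, hv⟩ : σ.1.Nonempty := by
      rw [← Finset.card_pos, σ.2.2]; omega
    have hsubset : c.supp ∩ f ⁻¹' {σ} ⊆ Subtype.val ⁻¹' {τ : Finset V | τ ∈ K ∧ v ∈ τ} := by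
      rintro π ⟨-, hfπ⟩
      simp only [Set.mem_preimage, Set.mem_singleton_iff] at hfπ
      have hss := hf π
      rw [hfπ] at hss
      exact ⟨π.2.1, hss hv⟩
    exact Set.Finite.subset
      (Set.Finite.preimage Subtype.val_injective.injOn (hlocfin v)) hsubset
end

section
/- Let K be a simplicial complex and 0 ≤ r ≤ q. If the q-graph G_q(K) has an infinite connected component, then the r-graph G_r(K) also has an infinite connected component. -/
/-- Any two `r`-simplices contained in a common simplex of cardinality at least `r + 2`
are reachable from each other in the `r`-graph. -/
lemma reach_within {V : Type*} [DecidableEq V] (K : Set (Finset V)) (r : ℕ)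
    (hdown : ∀ σ ∈ K, ∀ ρ : Finset V, ρ ⊆ σ → ρ.Nonempty → ρ ∈ K) :
    ∀ (n : ℕ) (τ₁ τ₂ : {σ : Finset V // σ ∈ K ∧ σ.card = r + 1}) (s : Finset V),
      s ∈ K → r + 2 ≤ s.card → τ₁.1 ⊆ s → τ₂.1 ⊆ s → (τ₁.1 \ τ₂.1).card ≤ n →
      (upGraph K r).Reachable τ₁ τ₂ := by
  intro n
  induction n with
  | zero =>
    intro τ₁ τ₂ s hs hsc h1 h2 hd
    have hempty : τ₁.1 \ τ₂.1 = ∅ := Finset.card_eq_zero.mp (Nat.le_zero.mp hd)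
    have hsub : τ₁.1 ⊆ τ₂.1 := by
      intro x hx
      by_contra hx2
      exact absurd (Finset.mem_sdiff.mpr ⟨hx, hx2⟩) (by simp [hempty])
    have heq : τ₁ = τ₂ :=
      Subtype.ext (Finset.eq_of_subset_of_card_le hsub (by rw [τ₁.2.2, τ₂.2.2]))
    rw [heq]
  | succ n ih =>
    intro τ₁ τ₂ s hs hsc h1 h2 hd
    rcases Finset.eq_empty_or_nonempty (τ₁.1 \ τ₂.1) with hempty | ⟨x, hx⟩
    · have hsub : τ₁.1 ⊆ τ₂.1 := by
        intro x hx
        by_contra hx2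
        exact absurd (Finset.mem_sdiff.mpr ⟨hx, hx2⟩) (by simp [hempty])
      have heq : τ₁ = τ₂ :=
        Subtype.ext (Finset.eq_of_subset_of_card_le hsub (by rw [τ₁.2.2, τ₂.2.2]))
      rw [heq]
    · have hxm := Finset.mem_sdiff.mp hx
      have hy' : (τ₂.1 \ τ₁.1).Nonempty := by
        rcases Finset.eq_empty_or_nonempty (τ₂.1 \ τ₁.1) with he | hne'
        · have hsub : τ₂.1 ⊆ τ₁.1 := by
            intro z hz
            by_contra hz2
            exact absurd (Finset.mem_sdiff.mpr ⟨hz, hz2⟩) (by simp [he])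
          have heq : τ₂.1 = τ₁.1 :=
            Finset.eq_of_subset_of_card_le hsub (by rw [τ₁.2.2, τ₂.2.2])
          rw [heq] at hx
          simp at hx
        · exact hne'
      obtain ⟨y, hy⟩ := hy'
      have hym := Finset.mem_sdiff.mp hy
      have hy1 : y ∉ τ₁.1 := hym.2
      set τ' : Finset V := insert y (τ₁.1.erase x) with hτ'
      have hcard : τ'.card = r + 1 := by
        rw [hτ', Finset.card_insert_of_notMem (fun h => hy1 (Finset.mem_of_mem_erase h)),
          Finset.card_erase_of_mem hxm.1, τ₁.2.2]
        omega
      have hsub : τ' ⊆ s := by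
        intro z hz
        rcases Finset.mem_insert.mp hz with rfl | hz
        · exact h2 hym.1
        · exact h1 (Finset.mem_of_mem_erase hz)
      have hK : τ' ∈ K := hdown s hs τ' hsub (Finset.card_pos.mp (by rw [hcard]; omega))
      have hadj : (upGraph K r).Adj τ₁ ⟨τ', hK, hcard⟩ := by
        refine ⟨?_, insert y τ₁.1, ?_, ?_, Finset.subset_insert _ _, ?_⟩
        · intro h
          apply hy1
          rw [Subtype.ext_iff] at h
          rw [h]
          exact Finset.mem_insert_self y _
        · exact hdown s hs _ (Finset.insert_subset (h2 hym.1) h1)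
            ⟨y, Finset.mem_insert_self _ _⟩
        · rw [Finset.card_insert_of_notMem hy1, τ₁.2.2]
        · intro z hz
          rcases Finset.mem_insert.mp hz with rfl | hz
          · exact Finset.mem_insert_self _ _
          · exact Finset.mem_insert_of_mem (Finset.mem_of_mem_erase hz)
      have hsd : τ' \ τ₂.1 ⊆ (τ₁.1 \ τ₂.1).erase x := by
        intro z hz
        rcases Finset.mem_sdiff.mp hz with ⟨hz1, hz2⟩
        rcases Finset.mem_insert.mp hz1 with rfl | hz1
        · exact absurd hym.1 hz2
        · exact Finset.mem_erase.mpr ⟨(Finset.mem_erase.mp hz1).1,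
            Finset.mem_sdiff.mpr ⟨(Finset.mem_erase.mp hz1).2, hz2⟩⟩
      have hcount : (τ' \ τ₂.1).card ≤ n := by
        have h5 := Finset.card_le_card hsd
        rw [Finset.card_erase_of_mem hx] at h5
        omega
      exact (hadj.reachable).trans (ih ⟨τ', hK, hcard⟩ τ₂ s hs hsc hsub h2 hcount)

/-- Reachability in the `q`-graph transfers down to reachability of contained
`r`-simplices in the `r`-graph, provided `r + 2 ≤ q + 1`. -/
lemma reach_transfer {V : Type*} [DecidableEq V] (K : Set (Finset V)) (q r : ℕ)
    (hrq : r + 2 ≤ q + 1)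
    (hdown : ∀ σ ∈ K, ∀ ρ : Finset V, ρ ⊆ σ → ρ.Nonempty → ρ ∈ K) :
    ∀ (σ ρ : {σ : Finset V // σ ∈ K ∧ σ.card = q + 1})
      (_ : (upGraph K q).Walk σ ρ)
      (τ₁ τ₂ : {σ : Finset V // σ ∈ K ∧ σ.card = r + 1}),
      τ₁.1 ⊆ σ.1 → τ₂.1 ⊆ ρ.1 → (upGraph K r).Reachable τ₁ τ₂ := by
  intro σ ρ w
  induction w with
  | nil =>
    rename_i a
    intro τ₁ τ₂ h1 h2
    exact reach_within K r hdown _ τ₁ τ₂ a.1 a.2.1 (by rw [a.2.2]; omega) h1 h2 le_rfl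
  | cons hadj w ih =>
    rename_i a b c
    intro τ₁ τ₂ h1 h2
    obtain ⟨hne', π, hπK, hπc, hs1, hs2⟩ := hadj
    obtain ⟨t, ht, htc⟩ := Finset.exists_subset_card_eq (show r + 1 ≤ b.1.card by rw [b.2.2]; omega)
    have htK : t ∈ K := hdown b.1 b.2.1 t ht (Finset.card_pos.mp (by rw [htc]; omega))
    have h1' : (upGraph K r).Reachable τ₁ ⟨t, htK, htc⟩ :=
      reach_within K r hdown _ τ₁ ⟨t, htK, htc⟩ π hπK (by rw [hπc]; omega)
        (h1.trans hs1) (ht.trans hs2) le_rfl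
    exact h1'.trans (ih ⟨t, htK, htc⟩ τ₂ ht h2)

/-- If K q-percolates (G_q(K) has an infinite connected component) then K
r-percolates for every r ≤ q. -/
theorem stmt4 {V : Type*} [DecidableEq V] (K : Set (Finset V)) (q r : ℕ) (hrq : r ≤ q)
    (hne : ∀ σ ∈ K, σ.Nonempty)
    (hdown : ∀ σ ∈ K, ∀ ρ : Finset V, ρ ⊆ σ → ρ.Nonempty → ρ ∈ K)
    (hperc : ∃ c : (upGraph K q).ConnectedComponent, c.supp.Infinite) :
    ∃ c : (upGraph K r).ConnectedComponent, c.supp.Infinite := by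
  rcases eq_or_lt_of_le hrq with rfl | hlt
  · exact hperc
  have hrq2 : r + 2 ≤ q + 1 := by omega
  obtain ⟨C, hC⟩ := hperc
  -- the union of vertices of q-simplices in C is infinite
  have hVinf : (⋃ σ ∈ C.supp, (σ.1 : Set V)).Infinite := by
    by_contra h
    rw [Set.not_infinite] at h
    apply hC
    have hfin2 : {s : Finset V | (s : Set V) ⊆ ⋃ σ ∈ C.supp, (σ.1 : Set V)}.Finite := by
      have : {s : Finset V | (s : Set V) ⊆ ⋃ σ ∈ C.supp, (σ.1 : Set V)} =
          (fun s : Finset V => (s : Set V)) ⁻¹'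
            {t : Set V | t ⊆ ⋃ σ ∈ C.supp, (σ.1 : Set V)} := rfl
      rw [this]
      exact Set.Finite.preimage Finset.coe_injective.injOn h.finite_subsets
    have hsub : C.supp ⊆ Subtype.val ⁻¹'
        {s : Finset V | (s : Set V) ⊆ ⋃ σ ∈ C.supp, (σ.1 : Set V)} := by
      intro σ hσ
      exact fun x hx => Set.mem_biUnion hσ hx
    exact Set.Finite.subset (hfin2.preimage Subtype.val_injective.injOn) hsub
  -- pick a base r-simplex inside some q-simplex of C
  obtain ⟨σ₀, hσ₀⟩ := hC.nonempty
  obtain ⟨t₀, ht₀, ht₀c⟩ := Finset.exists_subset_card_eq (show r + 1 ≤ σ₀.1.card by rw [σ₀.2.2]; omega)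
  have ht₀K : t₀ ∈ K := hdown σ₀.1 σ₀.2.1 t₀ ht₀ (Finset.card_pos.mp (by rw [ht₀c]; omega))
  set τ₀ : {σ : Finset V // σ ∈ K ∧ σ.card = r + 1} := ⟨t₀, ht₀K, ht₀c⟩ with hτ₀
  set c₀ := (upGraph K r).connectedComponentMk τ₀ with hc₀
  set S : Set {σ : Finset V // σ ∈ K ∧ σ.card = r + 1} :=
    {τ | ∃ σ, σ ∈ C.supp ∧ τ.1 ⊆ σ.1} with hS
  -- S lies in the component of τ₀
  have hSsub : S ⊆ c₀.supp := by
    rintro τ ⟨σ, hσ, hτσ⟩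
    have hmk1 := (SimpleGraph.ConnectedComponent.mem_supp_iff _ _).mp hσ₀
    have hmk2 := (SimpleGraph.ConnectedComponent.mem_supp_iff _ _).mp hσ
    have hreach : (upGraph K q).Reachable σ₀ σ :=
      SimpleGraph.ConnectedComponent.exact (by rw [hmk1, hmk2])
    obtain ⟨w⟩ := hreach
    have hr : (upGraph K r).Reachable τ₀ τ :=
      reach_transfer K q r hrq2 hdown σ₀ σ w τ₀ τ ht₀ hτσ
    rw [SimpleGraph.ConnectedComponent.mem_supp_iff]
    exact SimpleGraph.ConnectedComponent.sound hr.symm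
  -- S is infinite
  have hSinf : S.Infinite := by
    by_contra h
    rw [Set.not_infinite] at h
    have hfinU : (⋃ τ ∈ S, (τ.1 : Set V)).Finite :=
      Set.Finite.biUnion h (fun τ _ => τ.1.finite_toSet)
    apply hVinf
    apply hfinU.subset
    intro v hv
    obtain ⟨σ, hσ, hvσ⟩ := Set.mem_iUnion₂.mp hv
    have hvσ' : v ∈ σ.1 := hvσ
    obtain ⟨t, ht, htc⟩ := Finset.exists_subset_card_eq (show r ≤ (σ.1.erase v).card
      by rw [Finset.card_erase_of_mem hvσ', σ.2.2]; omega)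
    have hvnott : v ∉ t := fun hvt => (Finset.mem_erase.mp (ht hvt)).1 rfl
    have hτsub : insert v t ⊆ σ.1 :=
      Finset.insert_subset hvσ' (ht.trans (Finset.erase_subset _ _))
    have hτc : (insert v t).card = r + 1 := by
      rw [Finset.card_insert_of_notMem hvnott, htc]
    have hτK : insert v t ∈ K :=
      hdown σ.1 σ.2.1 _ hτsub ⟨v, Finset.mem_insert_self _ _⟩
    exact Set.mem_biUnion (show (⟨insert v t, hτK, hτc⟩ :
        {σ : Finset V // σ ∈ K ∧ σ.card = r + 1}) ∈ S from ⟨σ, hσ, hτsub⟩)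
      (by simp)
  exact ⟨c₀, hSinf.mono hSsub⟩
end

section
/- Fix q ∈ ℕ₀ and p₀ ∈ [0,1). For k ∈ ℕ₀ let N(k) := ⌊k/(q+1)⌋. If τ is a Poisson random variable with parameter b ≥ 1, then E[p₀^{N(τ)}] ≤ (q+1) · b^q · exp( −b (1 − p₀^{1/(q+1)}) ). In particular, E[p₀^{N(τ)}] → 0 as b → ∞. -/
/-- For q ∈ ℕ₀, p₀ ∈ [0,1), N(k) = ⌊k/(q+1)⌋ and τ ~ Po(b) with b ≥ 1, we have
E[p₀^{N(τ)}] ≤ (q+1) b^q exp(−b(1 − p₀^{1/(q+1)})); in particular E[p₀^{N(τ)}] → 0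
as b → ∞. -/
theorem stmt6 (q : ℕ) (p₀ : ℝ) (hp₀ : 0 ≤ p₀) (hp₁ : p₀ < 1) :
    (∀ b : ℝ, 1 ≤ b →
      (∑' k : ℕ, Real.exp (-b) * b ^ k / (Nat.factorial k) * p₀ ^ (k / (q + 1)))
        ≤ (q + 1) * b ^ q * Real.exp (-b * (1 - p₀ ^ ((1 : ℝ) / (q + 1))))) ∧
    Filter.Tendsto
      (fun b : ℝ => ∑' k : ℕ, Real.exp (-b) * b ^ k / (Nat.factorial k) * p₀ ^ (k / (q + 1)))
      Filter.atTop (nhds 0) := by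
  set r : ℝ := p₀ ^ ((1 : ℝ) / (q + 1)) with hrdef
  have hr0 : 0 ≤ r := Real.rpow_nonneg hp₀ _
  have hr1 : r < 1 := Real.rpow_lt_one hp₀ hp₁ (by positivity)
  have hpr : r ^ (q + 1) = p₀ := by
    rw [hrdef, ← Real.rpow_natCast (p₀ ^ ((1 : ℝ) / (q + 1))) (q + 1),
      ← Real.rpow_mul hp₀, one_div]
    push_cast
    rw [inv_mul_cancel₀ (by positivity), Real.rpow_one]
  have key : ∀ b : ℝ, 1 ≤ b →
      (∑' k : ℕ, Real.exp (-b) * b ^ k / (Nat.factorial k) * p₀ ^ (k / (q + 1)))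
        ≤ (q + 1) * b ^ q * Real.exp (-b * (1 - r)) := by
    intro b hb
    have hb0 : (0 : ℝ) ≤ b := le_trans zero_le_one hb
    set f : ℕ → ℝ := fun k => Real.exp (-b) * b ^ k / (Nat.factorial k) * p₀ ^ (k / (q + 1))
      with hf
    have hfnn : ∀ k, 0 ≤ f k := by
      intro k
      have : (0:ℝ) < (Nat.factorial k : ℝ) := by positivity
      positivity
    have hfle : ∀ k, f k ≤ Real.exp (-b) * (b ^ k / (Nat.factorial k)) := by
      intro k
      have h1 : p₀ ^ (k / (q + 1)) ≤ 1 := pow_le_one₀ hp₀ hp₁.le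
      have h2 : (0:ℝ) ≤ Real.exp (-b) * b ^ k / (Nat.factorial k) := by positivity
      calc f k ≤ Real.exp (-b) * b ^ k / (Nat.factorial k) * 1 := by
            exact mul_le_mul_of_nonneg_left h1 h2
        _ = Real.exp (-b) * (b ^ k / (Nat.factorial k)) := by ring
    have hsum : Summable f :=
      Summable.of_nonneg_of_le hfnn hfle ((Real.summable_pow_div_factorial b).mul_left _)
    have hgsum : Summable (fun k : ℕ => Real.exp (-b) * b ^ q * ((b * r) ^ k / k.factorial)) :=
      (Real.summable_pow_div_factorial (b * r)).mul_left _
    have htail : ∀ k : ℕ, f (k + q) ≤ Real.exp (-b) * b ^ q * ((b * r) ^ k / k.factorial) := by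
      intro k
      have h1 : p₀ ^ ((k + q) / (q + 1)) ≤ r ^ k := by
        rw [← hpr, ← pow_mul]
        apply pow_le_pow_of_le_one hr0 hr1.le
        have hmod : (k + q) % (q + 1) ≤ q := Nat.lt_succ_iff.mp (Nat.mod_lt _ (Nat.succ_pos q))
        have hdm := Nat.div_add_mod (k + q) (q + 1)
        omega
      have h2 : (k.factorial : ℝ) ≤ ((k + q).factorial : ℝ) := by
        exact_mod_cast Nat.factorial_le (Nat.le_add_right k q)
      have hk0 : (0:ℝ) < (k.factorial : ℝ) := by positivity
      have hkq0 : (0:ℝ) < ((k + q).factorial : ℝ) := by positivity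
      calc f (k + q)
          = Real.exp (-b) * b ^ q * (b ^ k * p₀ ^ ((k + q) / (q + 1)) / ((k + q).factorial)) := by
            simp only [hf, pow_add]; ring
        _ ≤ Real.exp (-b) * b ^ q * (b ^ k * r ^ k / k.factorial) := by
            gcongr
        _ = Real.exp (-b) * b ^ q * ((b * r) ^ k / k.factorial) := by rw [mul_pow]
    have hhead : ∀ i ∈ Finset.range q, f i ≤ Real.exp (-b) * b ^ q := by
      intro i hi
      have hiq : i ≤ q := (Finset.mem_range.mp hi).le
      have h1 : p₀ ^ (i / (q + 1)) ≤ 1 := pow_le_one₀ hp₀ hp₁.le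
      have h2 : b ^ i ≤ b ^ q := pow_le_pow_right₀ hb hiq
      have h3 : (1:ℝ) ≤ (i.factorial : ℝ) := by exact_mod_cast Nat.one_le_iff_ne_zero.mpr i.factorial_ne_zero
      calc f i ≤ Real.exp (-b) * b ^ i / (Nat.factorial i) := by
            have : (0:ℝ) ≤ Real.exp (-b) * b ^ i / (Nat.factorial i) := by positivity
            exact (mul_le_mul_of_nonneg_left h1 this).trans_eq (mul_one _)
        _ ≤ Real.exp (-b) * b ^ i / 1 := by
            gcongr
        _ = Real.exp (-b) * b ^ i := by ring
        _ ≤ Real.exp (-b) * b ^ q := by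
            exact mul_le_mul_of_nonneg_left h2 (Real.exp_pos _).le
    have hsplit : (∑' k, f k) = ∑ i ∈ Finset.range q, f i + ∑' k, f (k + q) :=
      (Summable.sum_add_tsum_nat_add q hsum).symm
    have htailsum : (∑' k, f (k + q)) ≤ Real.exp (-b) * b ^ q * Real.exp (b * r) := by
      have hsum' : Summable (fun k => f (k + q)) := (summable_nat_add_iff q).mpr hsum
      calc (∑' k, f (k + q))
          ≤ ∑' k : ℕ, Real.exp (-b) * b ^ q * ((b * r) ^ k / k.factorial) :=
            Summable.tsum_le_tsum htail hsum' hgsum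
        _ = Real.exp (-b) * b ^ q * ∑' k : ℕ, ((b * r) ^ k / (k.factorial : ℝ)) := tsum_mul_left
        _ = Real.exp (-b) * b ^ q * Real.exp (b * r) := by
            rw [Real.exp_eq_exp_ℝ, NormedSpace.exp_eq_tsum_div]
    have hheadsum : (∑ i ∈ Finset.range q, f i) ≤ q * (Real.exp (-b) * b ^ q) := by
      calc (∑ i ∈ Finset.range q, f i) ≤ ∑ _i ∈ Finset.range q, Real.exp (-b) * b ^ q :=
            Finset.sum_le_sum hhead
        _ = q * (Real.exp (-b) * b ^ q) := by simp [mul_comm]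
    have hexp : Real.exp (-b * (1 - r)) = Real.exp (-b) * Real.exp (b * r) := by
      rw [← Real.exp_add]; ring_nf
    have hexp1 : (1:ℝ) ≤ Real.exp (b * r) := by
      rw [Real.one_le_exp_iff]; positivity
    have hbq : (0:ℝ) ≤ b ^ q := by positivity
    calc (∑' k, f k) = ∑ i ∈ Finset.range q, f i + ∑' k, f (k + q) := hsplit
      _ ≤ q * (Real.exp (-b) * b ^ q) + Real.exp (-b) * b ^ q * Real.exp (b * r) :=
          add_le_add hheadsum htailsum
      _ ≤ q * (Real.exp (-b) * b ^ q * Real.exp (b * r)) +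
          Real.exp (-b) * b ^ q * Real.exp (b * r) := by
          have : Real.exp (-b) * b ^ q ≤ Real.exp (-b) * b ^ q * Real.exp (b * r) :=
            le_mul_of_one_le_right (by positivity) hexp1
          nlinarith [this, Nat.cast_nonneg (α := ℝ) q]
      _ = (q + 1) * b ^ q * Real.exp (-b * (1 - r)) := by rw [hexp]; ring
  refine ⟨key, ?_⟩
  have hc : (0:ℝ) < 1 - r := by linarith
  have htend : Filter.Tendsto (fun b : ℝ => (q + 1 : ℝ) * b ^ q * Real.exp (-b * (1 - r)))
      Filter.atTop (nhds 0) := by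
    have h1 : Filter.Tendsto (fun b : ℝ => ((1 - r) * b) ^ q * Real.exp (-((1 - r) * b)))
        Filter.atTop (nhds 0) :=
      (Real.tendsto_pow_mul_exp_neg_atTop_nhds_zero q).comp (Filter.tendsto_const_mul_atTop_of_pos hc |>.mpr Filter.tendsto_id)
    have h2 := h1.const_mul ((q + 1 : ℝ) / (1 - r) ^ q)
    rw [mul_zero] at h2
    refine h2.congr (fun b => ?_)
    have : ((1 - r) : ℝ) ^ q ≠ 0 := by positivity
    field_simp [mul_pow]
    ring_nf
    rw [← mul_pow]
    ring
  refine squeeze_zero' ?_ ?_ htend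
  · filter_upwards [Filter.eventually_ge_atTop (1:ℝ)] with b hb
    have hb0 : (0:ℝ) ≤ b := le_trans zero_le_one hb
    apply tsum_nonneg
    intro k
    have : (0:ℝ) < (Nat.factorial k : ℝ) := by positivity
    positivity
  · filter_upwards [Filter.eventually_ge_atTop (1:ℝ)] with b hb
    exact key b hb
end

section
/- Let b > 0, let ϑ be a Poisson random variable with parameter b, and let N be an ℕ₀ ∪ {∞}-valued random variable independent of ϑ. Then P(0 < N ≤ ϑ) ≤ b e^b · P(N = ϑ + 1). -/
open MeasureTheory ProbabilityTheory

/-- If ϑ ~ Po(b) with b > 0 and N is an ℕ₀ ∪ {∞}-valued random variable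
independent of ϑ, then P(0 < N ≤ ϑ) ≤ b e^b · P(N = ϑ + 1). -/
theorem stmt7 {Ω : Type*} [MeasurableSpace Ω] (P : Measure Ω) [IsProbabilityMeasure P]
    (b : ℝ) (hb : 0 < b) (ϑ : Ω → ℕ) (N : Ω → ℕ∞)
    (hϑm : Measurable ϑ) (hNm : Measurable N)
    (hpois : ∀ k : ℕ, P {ω | ϑ ω = k} =
      ENNReal.ofReal (Real.exp (-b) * b ^ k / (Nat.factorial k)))
    (hindep : IndepFun ϑ N P) :
    P {ω | 0 < N ω ∧ N ω ≤ (ϑ ω : ℕ∞)} ≤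
      ENNReal.ofReal (b * Real.exp b) * P {ω | N ω = (ϑ ω : ℕ∞) + 1} := by
  have hpois' : ∀ k : ℕ, P (ϑ ⁻¹' {k}) =
      ENNReal.ofReal (Real.exp (-b) * b ^ k / (Nat.factorial k)) := by
    intro k
    have : ϑ ⁻¹' {k} = {ω | ϑ ω = k} := by ext ω; simp
    rw [this, hpois]
  have hmϑ : ∀ s : Set ℕ, MeasurableSet (ϑ ⁻¹' s) := fun s => hϑm trivial
  have hmN : ∀ x : ℕ∞, MeasurableSet (N ⁻¹' {x}) :=
    fun x => hNm (measurableSet_singleton _)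
  -- total mass of ϑ is 1
  have hsum1 : ∑' k : ℕ, P (ϑ ⁻¹' {k}) = 1 := by
    rw [← measure_iUnion (fun i j hij => by
        simp only [Set.disjoint_left, Set.mem_preimage, Set.mem_singleton_iff]
        intro ω h1 h2; exact hij (h1 ▸ h2)) (fun k => hmϑ _)]
    have : (⋃ k : ℕ, ϑ ⁻¹' {k}) = Set.univ := by
      ext ω; simp
    rw [this, measure_univ]
  -- tail estimate
  have htail : ∀ m : ℕ, P (ϑ ⁻¹' Set.Ici m) ≤
      ENNReal.ofReal (b ^ m / Nat.factorial m) := by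
    intro m
    have hdecomp : P (ϑ ⁻¹' Set.Ici m) = ∑' k : ℕ, P (ϑ ⁻¹' {m + k}) := by
      rw [← measure_iUnion (fun i j hij => by
          simp only [Set.disjoint_left, Set.mem_preimage, Set.mem_singleton_iff]
          intro ω h1 h2; exact hij (by omega : i = j)) (fun k => hmϑ _)]
      congr 1
      ext ω
      simp only [Set.mem_iUnion, Set.mem_preimage, Set.mem_singleton_iff, Set.mem_Ici]
      constructor
      · intro h; exact ⟨ϑ ω - m, by omega⟩
      · rintro ⟨k, hk⟩; omega
    rw [hdecomp]
    have hterm : ∀ k : ℕ, P (ϑ ⁻¹' {m + k}) ≤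
        ENNReal.ofReal (b ^ m / Nat.factorial m) * P (ϑ ⁻¹' {k}) := by
      intro k
      rw [hpois', hpois', ← ENNReal.ofReal_mul (by positivity)]
      apply ENNReal.ofReal_le_ofReal
      have hfac : (Nat.factorial m : ℝ) * Nat.factorial k ≤ Nat.factorial (m + k) := by
        exact_mod_cast Nat.le_of_dvd (Nat.factorial_pos _)
          (Nat.factorial_mul_factorial_dvd_factorial_add m k)
      have hb' : (0:ℝ) ≤ b := hb.le
      rw [pow_add]
      have h1 : Real.exp (-b) * (b ^ m * b ^ k) / (Nat.factorial (m + k)) ≤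
          Real.exp (-b) * (b ^ m * b ^ k) / ((Nat.factorial m : ℝ) * Nat.factorial k) := by
        gcongr
      refine h1.trans (le_of_eq ?_)
      field_simp
    calc ∑' k : ℕ, P (ϑ ⁻¹' {m + k})
        ≤ ∑' k : ℕ, ENNReal.ofReal (b ^ m / Nat.factorial m) * P (ϑ ⁻¹' {k}) :=
          ENNReal.tsum_le_tsum hterm
      _ = ENNReal.ofReal (b ^ m / Nat.factorial m) * ∑' k : ℕ, P (ϑ ⁻¹' {k}) :=
          ENNReal.tsum_mul_left
      _ = ENNReal.ofReal (b ^ m / Nat.factorial m) := by rw [hsum1, mul_one]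
  -- key pointwise bound
  have key : ∀ n : ℕ, P (ϑ ⁻¹' Set.Ici (n + 1)) ≤
      ENNReal.ofReal (b * Real.exp b) * P (ϑ ⁻¹' {n}) := by
    intro n
    refine (htail (n + 1)).trans ?_
    rw [hpois', ← ENNReal.ofReal_mul (by positivity)]
    apply ENNReal.ofReal_le_ofReal
    have hexp : b * Real.exp b * (Real.exp (-b) * b ^ n / Nat.factorial n)
        = b ^ (n + 1) / Nat.factorial n := by
      rw [Real.exp_neg]
      have := Real.exp_pos b
      field_simp
      ring
    rw [hexp]
    gcongr
    omega
  -- decompose the two events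
  have hE : P {ω | 0 < N ω ∧ N ω ≤ (ϑ ω : ℕ∞)} =
      ∑' n : ℕ, P (ϑ ⁻¹' Set.Ici (n + 1) ∩ N ⁻¹' {((n + 1 : ℕ) : ℕ∞)}) := by
    rw [← measure_iUnion (fun i j hij => by
        simp only [Set.disjoint_left, Set.mem_inter_iff, Set.mem_preimage,
          Set.mem_singleton_iff]
        rintro ω ⟨-, h1⟩ ⟨-, h2⟩
        rw [h1] at h2
        exact hij (by exact_mod_cast Nat.succ_injective (Nat.cast_injective h2))
        ) (fun n => ((hmϑ _).inter (hmN _)))]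
    congr 1
    ext ω
    simp only [Set.mem_iUnion, Set.mem_inter_iff, Set.mem_preimage, Set.mem_setOf_eq,
      Set.mem_Ici, Set.mem_singleton_iff]
    constructor
    · rintro ⟨hpos, hle⟩
      have hlt : N ω < ⊤ := lt_of_le_of_lt hle (ENat.coe_lt_top _)
      obtain ⟨m, hm⟩ := WithTop.ne_top_iff_exists.mp hlt.ne
      have hm' : (m : ℕ∞) = N ω := hm
      have hm0 : 0 < m := Nat.pos_of_ne_zero fun h => by
        rw [← hm', h] at hpos; simp at hpos
      rw [← hm'] at hle
      have hle2 : m ≤ ϑ ω := by exact_mod_cast hle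
      refine ⟨m - 1, by omega, ?_⟩
      rw [← hm']; congr 1; omega
    · rintro ⟨n, h1, h2⟩
      rw [h2]
      constructor
      · exact_mod_cast Nat.succ_pos n
      · exact_mod_cast h1
  have hF : P {ω | N ω = (ϑ ω : ℕ∞) + 1} =
      ∑' n : ℕ, P (ϑ ⁻¹' {n} ∩ N ⁻¹' {((n + 1 : ℕ) : ℕ∞)}) := by
    rw [← measure_iUnion (fun i j hij => by
        simp only [Set.disjoint_left, Set.mem_inter_iff, Set.mem_preimage,
          Set.mem_singleton_iff]
        rintro ω ⟨h1, -⟩ ⟨h2, -⟩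
        exact hij (h1 ▸ h2)) (fun n => ((hmϑ _).inter (hmN _)))]
    congr 1
    ext ω
    simp only [Set.mem_iUnion, Set.mem_inter_iff, Set.mem_preimage, Set.mem_setOf_eq,
      Set.mem_singleton_iff]
    constructor
    · intro h
      exact ⟨ϑ ω, rfl, by rw [h]; push_cast; ring⟩
    · rintro ⟨n, h1, h2⟩
      rw [h2, h1]; push_cast; ring
  -- independence factorization
  have hind : ∀ (s : Set ℕ) (n : ℕ),
      P (ϑ ⁻¹' s ∩ N ⁻¹' {((n + 1 : ℕ) : ℕ∞)}) =
      P (ϑ ⁻¹' s) * P (N ⁻¹' {((n + 1 : ℕ) : ℕ∞)}) := by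
    intro s n
    exact hindep.measure_inter_preimage_eq_mul s _ trivial (measurableSet_singleton _)
  calc P {ω | 0 < N ω ∧ N ω ≤ (ϑ ω : ℕ∞)}
      = ∑' n : ℕ, P (ϑ ⁻¹' Set.Ici (n + 1)) * P (N ⁻¹' {((n + 1 : ℕ) : ℕ∞)}) := by
        rw [hE]; exact tsum_congr fun n => hind _ n
    _ ≤ ∑' n : ℕ, ENNReal.ofReal (b * Real.exp b) *
          (P (ϑ ⁻¹' {n}) * P (N ⁻¹' {((n + 1 : ℕ) : ℕ∞)})) := by
        refine ENNReal.tsum_le_tsum fun n => ?_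
        rw [← mul_assoc]
        exact mul_le_mul_left (key n) _
    _ = ENNReal.ofReal (b * Real.exp b) *
          ∑' n : ℕ, P (ϑ ⁻¹' {n}) * P (N ⁻¹' {((n + 1 : ℕ) : ℕ∞)}) :=
        ENNReal.tsum_mul_left
    _ = ENNReal.ofReal (b * Real.exp b) * P {ω | N ω = (ϑ ω : ℕ∞) + 1} := by
        rw [hF]
        congr 1
        exact tsum_congr fun n => (hind _ n).symm
end
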